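/- Let n ≥ 1 and let χ be a nontrivial character of the additive group F^n. Then there is exactly one (n−1)-dimensional F-subspace X of H₀ such that p(χ)(X̂) is not the zero function. (This unique subspace is denoted X(χ); equivalently, the isotypic component W(χ,n) is one-dimensional.) -/

import Mathlib

open Module

noncomputable def H0 (F : Type) [Field F] (n : ℕ) : Submodule F (Fin (n + 1) → F) :=
  LinearMap.ker (LinearMap.proj (R := F) (φ := fun _ : Fin (n + 1) => F) (Fin.last n))

def gmap (F : Type) [Field F] (n : ℕ) (a : Fin n → F) :
    (Fin (n + 1) → F) →ₗ[F] (Fin (n + 1) → F) where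
  toFun v := v + v (Fin.last n) • (Fin.snoc a 0 : Fin (n + 1) → F)
  map_add' u v := by
    funext i
    simp only [Pi.add_apply, Pi.smul_apply, smul_eq_mul]
    ring
  map_smul' c v := by
    funext i
    simp only [Pi.add_apply, Pi.smul_apply, smul_eq_mul, RingHom.id_apply]
    ring


open Classical in
/-- `pchi F n χ X` is the function `p(χ)(X) : B_q(n+1) → ℂ` whose value at `Z` is
`∑_{a : g_a(X) = Z} conj (χ a)`; it vanishes off the orbit of `X`. -/
noncomputable def pchi (F : Type) [Field F] [Fintype F] (n : ℕ)
    (χ : AddChar (Fin n → F) ℂ) (X : Submodule F (Fin (n + 1) → F)) :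
    Submodule F (Fin (n + 1) → F) → ℂ :=
  fun Z => ∑ a : Fin n → F,
    if Submodule.map (gmap F n a) X = Z then (starRingEnd ℂ) (χ a) else 0

/-- For a subspace `X ⊆ H₀`, `hatX F n X` is the subspace `X̂` of `F^{n+1}` spanned by `X`
and the last standard basis vector `e_{n+1}`. -/
noncomputable def hatX (F : Type) [Field F] (n : ℕ) (X : Submodule F (Fin (n + 1) → F)) :
    Submodule F (Fin (n + 1) → F) :=
  X ⊔ Submodule.span F {Pi.single (Fin.last n) (1 : F)}

section Aux

variable (F : Type) [Field F] (n : ℕ)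

/-- The linear embedding `F^n → F^{n+1}`, `a ↦ (a, 0)`. -/
def iota : (Fin n → F) →ₗ[F] (Fin (n + 1) → F) where
  toFun a := Fin.snoc a 0
  map_add' a b := by
    funext i
    refine Fin.lastCases ?_ (fun j => ?_) i <;>
      simp [Fin.snoc_last, Fin.snoc_castSucc]
  map_smul' c a := by
    funext i
    refine Fin.lastCases ?_ (fun j => ?_) i <;>
      simp [Fin.snoc_last, Fin.snoc_castSucc]

lemma iota_apply (a : Fin n → F) : iota F n a = Fin.snoc a 0 := rfl

lemma iota_last (a : Fin n → F) : iota F n a (Fin.last n) = 0 := by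
  simp [iota_apply]

lemma iota_injective : Function.Injective (iota F n) := by
  intro a b h
  funext i
  have := congrFun h (Fin.castSucc i)
  simpa [iota_apply] using this

lemma mem_H0_iff (v : Fin (n + 1) → F) : v ∈ H0 F n ↔ v (Fin.last n) = 0 := by
  simp [H0, LinearMap.mem_ker]

lemma iota_mem_H0 (a : Fin n → F) : iota F n a ∈ H0 F n := by
  rw [mem_H0_iff]; exact iota_last F n a

lemma eq_iota_of_mem_H0 {v : Fin (n + 1) → F} (hv : v ∈ H0 F n) :
    v = iota F n (Fin.init v) := by
  rw [mem_H0_iff] at hv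
  rw [iota_apply, ← hv, Fin.snoc_init_self]

lemma gmap_apply (a : Fin n → F) (v : Fin (n + 1) → F) :
    gmap F n a v = v + v (Fin.last n) • (Fin.snoc a 0 : Fin (n + 1) → F) := rfl

lemma gmap_fix {v : Fin (n + 1) → F} (a : Fin n → F) (hv : v ∈ H0 F n) :
    gmap F n a v = v := by
  rw [mem_H0_iff] at hv
  rw [gmap_apply, hv, zero_smul, add_zero]

lemma gmap_e (a : Fin n → F) :
    gmap F n a (Pi.single (Fin.last n) (1 : F)) =
      Pi.single (Fin.last n) (1 : F) + iota F n a := by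
  rw [gmap_apply, Pi.single_eq_same, one_smul, iota_apply]

lemma map_gmap_X {X : Submodule F (Fin (n + 1) → F)} (hX : X ≤ H0 F n) (a : Fin n → F) :
    Submodule.map (gmap F n a) X = X := by
  apply le_antisymm
  · rintro x ⟨y, hy, rfl⟩
    rw [gmap_fix F n a (hX hy)]
    exact hy
  · intro x hx
    exact ⟨x, hx, gmap_fix F n a (hX hx)⟩

lemma map_gmap_hatX {X : Submodule F (Fin (n + 1) → F)} (hX : X ≤ H0 F n) (a : Fin n → F) :
    Submodule.map (gmap F n a) (hatX F n X) =
      X ⊔ Submodule.span F {Pi.single (Fin.last n) (1 : F) + iota F n a} := by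
  rw [hatX, Submodule.map_sup, map_gmap_X F n hX, Submodule.map_span,
    Set.image_singleton, gmap_e]

lemma mem_sup_span_iff {X : Submodule F (Fin (n + 1) → F)} (hX : X ≤ H0 F n)
    (a b : Fin n → F) :
    Pi.single (Fin.last n) (1 : F) + iota F n a ∈
        X ⊔ Submodule.span F {Pi.single (Fin.last n) (1 : F) + iota F n b} ↔
      iota F n (a - b) ∈ X := by
  constructor
  · intro h
    rw [Submodule.mem_sup] at h
    obtain ⟨x, hx, y, hy, hxy⟩ := h
    rw [Submodule.mem_span_singleton] at hy
    obtain ⟨t, rfl⟩ := hy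
    have hx0 : x (Fin.last n) = 0 := (mem_H0_iff F n x).1 (hX hx)
    have hlast := congrFun hxy (Fin.last n)
    simp only [Pi.add_apply, Pi.smul_apply, smul_eq_mul, Pi.single_eq_same,
      iota_last, hx0, zero_add, add_zero, mul_one] at hlast
    subst hlast
    rw [one_smul] at hxy
    have hx' : x = (Pi.single (Fin.last n) (1 : F) + iota F n a)
        - (Pi.single (Fin.last n) (1 : F) + iota F n b) := eq_sub_of_add_eq hxy
    have hx2 : x = iota F n (a - b) := by rw [hx', map_sub]; abel
    rw [← hx2]; exact hx
  · intro h
    rw [Submodule.mem_sup]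
    refine ⟨iota F n (a - b), h, Pi.single (Fin.last n) (1 : F) + iota F n b,
      Submodule.mem_span_singleton_self _, ?_⟩
    rw [map_sub]
    abel

lemma sup_span_eq_iff {X : Submodule F (Fin (n + 1) → F)} (hX : X ≤ H0 F n)
    (a b : Fin n → F) :
    X ⊔ Submodule.span F {Pi.single (Fin.last n) (1 : F) + iota F n a} =
        X ⊔ Submodule.span F {Pi.single (Fin.last n) (1 : F) + iota F n b} ↔
      iota F n (a - b) ∈ X := by
  constructor
  · intro h
    rw [← mem_sup_span_iff F n hX a b, ← h]
    exact Submodule.mem_sup_right (Submodule.mem_span_singleton_self _)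
  · intro h
    have hba : iota F n (b - a) ∈ X := by
      have : b - a = -(a - b) := by abel
      rw [this, map_neg]
      exact X.neg_mem h
    apply le_antisymm <;> rw [sup_le_iff] <;>
      refine ⟨le_sup_left, ?_⟩ <;> rw [Submodule.span_le, Set.singleton_subset_iff]
    · exact (mem_sup_span_iff F n hX a b).2 h
    · exact (mem_sup_span_iff F n hX b a).2 hba

lemma map_gmap_eq_iff {X : Submodule F (Fin (n + 1) → F)} (hX : X ≤ H0 F n)
    (a b : Fin n → F) :
    Submodule.map (gmap F n a) (hatX F n X) = Submodule.map (gmap F n b) (hatX F n X) ↔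
      iota F n (a - b) ∈ X := by
  rw [map_gmap_hatX F n hX, map_gmap_hatX F n hX, sup_span_eq_iff F n hX]

lemma map_gmap_eq_self_iff {X : Submodule F (Fin (n + 1) → F)} (hX : X ≤ H0 F n)
    (a : Fin n → F) :
    Submodule.map (gmap F n a) (hatX F n X) = hatX F n X ↔ iota F n a ∈ X := by
  have he : (Submodule.span F {Pi.single (Fin.last n) (1 : F)}) =
      Submodule.span F {Pi.single (Fin.last n) (1 : F) + iota F n 0} := by
    rw [map_zero, add_zero]
  conv_lhs => rw [map_gmap_hatX F n hX, hatX, he]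
  rw [sup_span_eq_iff F n hX, sub_zero]

end Aux

section Char

variable (F : Type) [Field F] [Fintype F] (n : ℕ) (χ : AddChar (Fin n → F) ℂ)

open Classical in
lemma pchi_ne_zero_iff {X : Submodule F (Fin (n + 1) → F)} (hX : X ≤ H0 F n) :
    pchi F n χ (hatX F n X) ≠ 0 ↔ ∀ a, iota F n a ∈ X → χ a = 1 := by
  constructor
  · -- contrapositive
    intro hp
    by_contra hcond
    push_neg at hcond
    obtain ⟨a0, ha0X, ha0⟩ := hcond
    apply hp
    funext Z
    show (∑ a : Fin n → F,
      if Submodule.map (gmap F n a) (hatX F n X) = Z then (starRingEnd ℂ) (χ a) else 0) = 0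
    by_cases hZ : ∃ b, Submodule.map (gmap F n b) (hatX F n X) = Z
    · obtain ⟨b, rfl⟩ := hZ
      have hsum : ∑ a : Fin n → F,
          (if Submodule.map (gmap F n a) (hatX F n X) =
              Submodule.map (gmap F n b) (hatX F n X) then (starRingEnd ℂ) (χ a) else 0) =
          ∑ c : Fin n → F,
          (if iota F n c ∈ X then (starRingEnd ℂ) (χ (b + c)) else 0) := by
        refine (Fintype.sum_equiv (Equiv.addLeft b) _ _ fun c => ?_).symm
        simp only [map_gmap_eq_iff F n hX]
        simp [add_sub_cancel_left]
      rw [hsum]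
      have : ∀ c : Fin n → F,
          (if iota F n c ∈ X then (starRingEnd ℂ) (χ (b + c)) else 0) =
          (starRingEnd ℂ) (χ b) * (if iota F n c ∈ X then (starRingEnd ℂ) (χ c) else 0) := by
        intro c
        by_cases hc : iota F n c ∈ X <;> simp [hc, AddChar.map_add_eq_mul, map_mul]
      simp_rw [this, ← Finset.mul_sum]
      have hzero : ∑ c : Fin n → F, (if iota F n c ∈ X then (starRingEnd ℂ) (χ c) else 0) = 0 := by
        have h1 : ∑ c : Fin n → F, (if iota F n c ∈ X then (starRingEnd ℂ) (χ c) else 0) =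
            (starRingEnd ℂ) (∑ c : Fin n → F, if iota F n c ∈ X then χ c else 0) := by
          rw [map_sum]
          refine Finset.sum_congr rfl fun c _ => ?_
          by_cases hc : iota F n c ∈ X <;> simp [hc]
        rw [h1]
        set A : Submodule F (Fin n → F) := Submodule.comap (iota F n) X with hA
        have h2 : ∑ c : Fin n → F, (if iota F n c ∈ X then χ c else 0) =
            ∑ c : A, χ c := by
          rw [← Finset.sum_filter]
          exact Finset.sum_subtype _ (fun x => by
            simp [hA, Submodule.mem_comap]) _
        rw [h2]
        have : ∑ c : A, χ c = ∑ c : A,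
            (χ.compAddMonoidHom (A.subtype.toAddMonoidHom)) c :=
          rfl
        rw [this, AddChar.sum_eq_zero_of_ne_one, map_zero]
        rw [AddChar.ne_one_iff]
        exact ⟨⟨a0, ha0X⟩, by simpa using fun h => ha0 h⟩
      rw [hzero, mul_zero]
    · push_neg at hZ
      exact Finset.sum_eq_zero fun a _ => by rw [if_neg (hZ a)]
  · intro h
    intro hp
    have := congrFun hp (hatX F n X)
    rw [Pi.zero_apply] at this
    rw [show pchi F n χ (hatX F n X) (hatX F n X) = ∑ a : Fin n → F,
      (if Submodule.map (gmap F n a) (hatX F n X) = hatX F n X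
        then (starRingEnd ℂ) (χ a) else 0) from rfl] at this
    have heq : ∑ a : Fin n → F,
        (if Submodule.map (gmap F n a) (hatX F n X) = hatX F n X
          then (starRingEnd ℂ) (χ a) else 0) =
        ∑ a : Fin n → F, (if iota F n a ∈ X then (1 : ℂ) else 0) := by
      refine Finset.sum_congr rfl fun a _ => ?_
      simp only [map_gmap_eq_self_iff F n hX]
      by_cases ha : iota F n a ∈ X
      · rw [if_pos ha, if_pos ha, h a ha, map_one]
      · rw [if_neg ha, if_neg ha]
    rw [heq] at this
    rw [Finset.sum_boole] at this
    have hpos : (0 : Fin n → F) ∈ Finset.univ.filter (fun a => iota F n a ∈ X) := by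
      simp [Finset.mem_filter]
    have := Nat.cast_injective (R := ℂ) (by exact_mod_cast this :
      ((Finset.univ.filter (fun a => iota F n a ∈ X)).card : ℂ) = (0 : ℕ))
    rw [Finset.card_eq_zero] at this
    rw [this] at hpos
    exact absurd hpos (Finset.notMem_empty _)

end Char

section Main

variable (F : Type) [Field F] (n : ℕ)

lemma map_comap_iota {X : Submodule F (Fin (n + 1) → F)} (hX : X ≤ H0 F n) :
    Submodule.map (iota F n) (Submodule.comap (iota F n) X) = X := by
  apply le_antisymm (Submodule.map_comap_le _ _)
  intro x hx
  refine ⟨Fin.init x, ?_, (eq_iota_of_mem_H0 F n (hX hx)).symm⟩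
  show Fin.init x ∈ Submodule.comap (iota F n) X
  rwa [Submodule.mem_comap, ← eq_iota_of_mem_H0 F n (hX hx)]

/-- The subspace of `c` such that `χ` is trivial on the line through `c`. -/
def Schi (χ : AddChar (Fin n → F) ℂ) : Submodule F (Fin n → F) where
  carrier := {c | ∀ t : F, χ (t • c) = 1}
  add_mem' := by
    intro a b ha hb t
    rw [smul_add, AddChar.map_add_eq_mul, ha t, hb t, one_mul]
  zero_mem' := by intro t; rw [smul_zero, AddChar.map_zero_eq_one]
  smul_mem' := by
    intro c a ha t
    rw [smul_smul]
    exact ha (t * c)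

lemma mem_Schi {χ : AddChar (Fin n → F) ℂ} {c : Fin n → F} :
    c ∈ Schi F n χ ↔ ∀ t : F, χ (t • c) = 1 := Iff.rfl

open Classical in
lemma card_Schi [Fintype F] (χ : AddChar (Fin n → F) ℂ) (hχ : ∃ a, χ a ≠ 1) :
    Fintype.card (Schi F n χ) * Fintype.card F = Fintype.card F ^ n := by
  have hC : ∀ c : Fin n → F, c ∉ Schi F n χ → ∑ t : F, χ (t • c) = 0 := by
    intro c hc
    have hne : (χ.compAddMonoidHom (LinearMap.toSpanSingleton F (Fin n → F) c).toAddMonoidHom)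
        ≠ 1 := by
      rw [AddChar.ne_one_iff]
      rw [mem_Schi] at hc
      push_neg at hc
      obtain ⟨t, ht⟩ := hc
      exact ⟨t, by simpa using ht⟩
    simpa using AddChar.sum_eq_zero_of_ne_one hne
  have hT : ∀ t : F, t ≠ 0 → ∑ c : Fin n → F, χ (t • c) = 0 := by
    intro t ht
    have hne : (χ.compAddMonoidHom (DistribMulAction.toAddMonoidHom (Fin n → F) t)) ≠ 1 := by
      rw [AddChar.ne_one_iff]
      obtain ⟨a, ha⟩ := hχ
      refine ⟨t⁻¹ • a, ?_⟩
      simpa [smul_smul, mul_inv_cancel₀ ht] using ha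
    simpa using AddChar.sum_eq_zero_of_ne_one hne
  have key : ∑ c : Fin n → F, ∑ t : F, χ (t • c) = (Fintype.card F : ℂ) ^ n := by
    rw [Finset.sum_comm]
    rw [Finset.sum_eq_single (0 : F) (fun t _ ht => hT t ht) (by simp)]
    simp [Finset.card_univ]
  have key2 : ∑ c : Fin n → F, ∑ t : F, χ (t • c) =
      (Fintype.card (Schi F n χ) : ℂ) * (Fintype.card F : ℂ) := by
    have hterm : ∀ c : Fin n → F, ∑ t : F, χ (t • c) =
        if c ∈ Schi F n χ then (Fintype.card F : ℂ) else 0 := by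
      intro c
      by_cases hc : c ∈ Schi F n χ
      · rw [if_pos hc]
        rw [Finset.sum_congr rfl fun t _ => (mem_Schi F n).1 hc t]
        simp [Finset.card_univ]
      · rw [if_neg hc]
        exact hC c hc
    rw [Finset.sum_congr rfl fun c _ => hterm c]
    rw [Finset.sum_ite, Finset.sum_const_zero, add_zero, Finset.sum_const,
      nsmul_eq_mul, Fintype.card_subtype]
  have := key.symm.trans key2
  exact_mod_cast this.symm

end Main

theorem stmt_16 (q n : ℕ) (F : Type) [Field F] [Fintype F] (hq : Fintype.card F = q)
    (hn : 1 ≤ n) (χ : AddChar (Fin n → F) ℂ) (hχ : ∃ a, χ a ≠ 1) :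
    ∃! X : Submodule F (Fin (n + 1) → F),
      X ≤ H0 F n ∧ finrank F X = n - 1 ∧ pchi F n χ (hatX F n X) ≠ 0 := by
  classical
  subst hq
  set q := Fintype.card F with hq
  have hq2 : 2 ≤ q := Fintype.one_lt_card
  have hcard : Fintype.card (Schi F n χ) * q = q ^ n := card_Schi F n χ hχ
  have hcard' : Fintype.card (Schi F n χ) = q ^ (n - 1) := by
    have hqn : q ^ n = q ^ (n - 1) * q := by
      rw [← pow_succ, Nat.sub_add_cancel hn]
    rw [hqn] at hcard
    exact Nat.eq_of_mul_eq_mul_right (by omega) hcard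
  have hrank : finrank F (Schi F n χ) = n - 1 := by
    have h := card_eq_pow_finrank (K := F) (V := Schi F n χ)
    rw [hcard'] at h
    exact (Nat.pow_right_injective hq2 h).symm
  set X₀ : Submodule F (Fin (n + 1) → F) := Submodule.map (iota F n) (Schi F n χ) with hX₀
  have hX₀le : X₀ ≤ H0 F n := by
    rintro x ⟨s, hs, rfl⟩
    exact iota_mem_H0 F n s
  have hX₀rank : finrank F X₀ = n - 1 := by
    rw [← hrank]
    exact (LinearEquiv.finrank_eq
      (Submodule.equivMapOfInjective (iota F n) (iota_injective F n) (Schi F n χ))).symm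
  have hcomap : Submodule.comap (iota F n) X₀ = Schi F n χ :=
    Submodule.comap_map_eq_of_injective (iota_injective F n) _
  refine ⟨X₀, ⟨hX₀le, hX₀rank, ?_⟩, ?_⟩
  · rw [pchi_ne_zero_iff F n χ hX₀le]
    intro a ha
    have haS : a ∈ Schi F n χ := by
      rw [← hcomap]; exact ha
    simpa using (mem_Schi F n).1 haS 1
  · rintro Y ⟨hYle, hYrank, hYp⟩
    have htriv : ∀ a, iota F n a ∈ Y → χ a = 1 := (pchi_ne_zero_iff F n χ hYle).1 hYp
    set A : Submodule F (Fin n → F) := Submodule.comap (iota F n) Y with hA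
    have hAS : A ≤ Schi F n χ := by
      intro c hc
      rw [mem_Schi]
      intro t
      exact htriv (t • c) (A.smul_mem t hc)
    have hmapA : Submodule.map (iota F n) A = Y := map_comap_iota F n hYle
    have hArank : finrank F A = n - 1 := by
      rw [← hYrank, ← hmapA]
      exact LinearEquiv.finrank_eq
        (Submodule.equivMapOfInjective (iota F n) (iota_injective F n) A)
    have hAeq : A = Schi F n χ :=
      Submodule.eq_of_le_of_finrank_eq hAS (by rw [hArank, hrank])
    rw [← hmapA, hAeq]
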